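/- Let m ≥ 1, X > 0, χ > 0, and let a_0,…,a_{m−1} : [0,X] → ℝ be continuously differentiable. Set α := Σ_{j=0}^{m−1} sup_{x∈[0,X]}|a_j'(x)| and β := α(χ^{m−1}+m!)/χ^{m+1}. Then for every ε > 0 and every ξ ∈ [0, X/ε], ∫₀^ξ e^{χζ}[1+(ξ−ζ)^{m−1}] Σ_{j=0}^{m−1} |a_j(εζ) − a_j(εξ)| dζ ≤ ε β e^{χξ}. -/

import Mathlib

open MeasureTheory intervalIntegral Set

lemma exp_pow_integral_bound (k : ℕ) {χ ξ : ℝ} (hχ : 0 < χ) (hξ : 0 ≤ ξ) :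
    (∫ ζ in (0:ℝ)..ξ, Real.exp (χ * ζ) * (ξ - ζ) ^ k)
      ≤ (Nat.factorial k : ℝ) / χ ^ (k + 1) * Real.exp (χ * ξ) := by
  have h1 : (∫ ζ in (0:ℝ)..ξ, Real.exp (χ * ζ) * (ξ - ζ) ^ k)
      = Real.exp (χ * ξ) * ∫ u in (0:ℝ)..ξ, Real.exp (-(χ * u)) * u ^ k := by
    have := intervalIntegral.integral_comp_sub_left
      (fun u => Real.exp (χ * (ξ - u)) * u ^ k) ξ (a := 0) (b := ξ)
    simp only [sub_zero, sub_self] at this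
    rw [show (∫ ζ in (0:ℝ)..ξ, Real.exp (χ * ζ) * (ξ - ζ) ^ k)
        = ∫ ζ in (0:ℝ)..ξ, (fun u => Real.exp (χ * (ξ - u)) * u ^ k) (ξ - ζ) by
      congr 1; ext ζ; ring_nf, this, ← intervalIntegral.integral_const_mul]
    congr 1; ext u
    rw [show χ * (ξ - u) = χ * ξ + -(χ * u) by ring, Real.exp_add, mul_assoc]
  rw [h1]
  have hint : IntegrableOn (fun u : ℝ => Real.exp (-(χ * u)) * u ^ k) (Ioi 0) := by
    have := integrableOn_rpow_mul_exp_neg_mul_rpow (s := (k:ℝ)) (p := 1) (b := χ)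
      (lt_of_lt_of_le neg_one_lt_zero (Nat.cast_nonneg k)) zero_lt_one hχ
    refine (this.congr_fun (fun x hx => ?_) measurableSet_Ioi)
    simp [Real.rpow_natCast, Real.rpow_one, mul_comm]
  have h2 : (∫ u in (0:ℝ)..ξ, Real.exp (-(χ * u)) * u ^ k)
      ≤ ∫ u in Ioi (0:ℝ), Real.exp (-(χ * u)) * u ^ k := by
    rw [intervalIntegral.integral_of_le hξ]
    apply setIntegral_mono_set hint
    · filter_upwards [self_mem_ae_restrict measurableSet_Ioi] with x hx
      have hx0 : (0:ℝ) < x := hx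
      positivity
    · exact HasSubset.Subset.eventuallyLE Ioc_subset_Ioi_self
  have h3 : (∫ u in Ioi (0:ℝ), Real.exp (-(χ * u)) * u ^ k)
      = (Nat.factorial k : ℝ) / χ ^ (k + 1) := by
    have := Real.integral_rpow_mul_exp_neg_mul_Ioi (a := (k:ℝ) + 1) (r := χ)
      (by positivity) hχ
    rw [show ∫ u in Ioi (0:ℝ), Real.exp (-(χ * u)) * u ^ k
        = ∫ t in Ioi (0:ℝ), t ^ ((k:ℝ) + 1 - 1) * Real.exp (-(χ * t)) by
      refine setIntegral_congr_fun measurableSet_Ioi (fun t ht => ?_)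
      rw [add_sub_cancel_right, Real.rpow_natCast]; ring, this]
    rw [Real.Gamma_nat_eq_factorial,
      show ((k:ℝ) + 1) = ((k + 1 : ℕ) : ℝ) by push_cast; ring, Real.rpow_natCast,
      div_pow, one_pow]
    ring
  calc Real.exp (χ * ξ) * ∫ u in (0:ℝ)..ξ, Real.exp (-(χ * u)) * u ^ k
      ≤ Real.exp (χ * ξ) * ((Nat.factorial k : ℝ) / χ ^ (k + 1)) := by
        exact mul_le_mul_of_nonneg_left (h3 ▸ h2) (Real.exp_pos _).le
    _ = (Nat.factorial k : ℝ) / χ ^ (k + 1) * Real.exp (χ * ξ) := by ring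


/-- Let `m ≥ 1`, `X > 0`, `χ > 0`, and let `a_0, …, a_{m−1} : [0,X] → ℝ` be continuously
differentiable.  With `α := Σ_j sup_{[0,X]} |a_j'|` and `β := α (χ^{m−1} + m!)/χ^{m+1}`,
for every `ε > 0` and every `ξ ∈ [0, X/ε]`,
`∫₀^ξ e^{χζ} [1+(ξ−ζ)^{m−1}] Σ_j |a_j(εζ) − a_j(εξ)| dζ ≤ ε β e^{χξ}`. -/
theorem coefficient_difference_integral_bound (m : ℕ) (hm : 1 ≤ m) (X χ : ℝ)
    (hX : 0 < X) (hχ : 0 < χ)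
    (a : Fin m → ℝ → ℝ) (ha : ∀ j, ContDiffOn ℝ 1 (a j) (Set.Icc 0 X))
    (α β : ℝ)
    (hα : α = ∑ j : Fin m, ⨆ x : Set.Icc (0:ℝ) X, |derivWithin (a j) (Set.Icc 0 X) x|)
    (hβ : β = α * (χ ^ (m - 1) + (Nat.factorial m : ℝ)) / χ ^ (m + 1)) :
    ∀ ε > (0:ℝ), ∀ ξ ∈ Set.Icc (0:ℝ) (X / ε),
      (∫ ζ in (0:ℝ)..ξ, Real.exp (χ * ζ) * (1 + (ξ - ζ) ^ (m - 1)) *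
          ∑ j : Fin m, |a j (ε * ζ) - a j (ε * ξ)|)
        ≤ ε * β * Real.exp (χ * ξ) := by
  intro ε hε ξ hξ
  obtain ⟨hξ0, hξX⟩ := hξ
  have hεξ : ε * ξ ≤ X := by
    rw [le_div_iff₀ hε] at hξX; linarith [hξX]
  set M : Fin m → ℝ := fun j => ⨆ x : Set.Icc (0:ℝ) X, |derivWithin (a j) (Set.Icc 0 X) x|
    with hM
  have hbdd : ∀ j, BddAbove (Set.range fun x : Set.Icc (0:ℝ) X =>
      |derivWithin (a j) (Set.Icc 0 X) x|) := by
    intro j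
    have hcd : ContinuousOn (fun x => |derivWithin (a j) (Set.Icc 0 X) x|) (Set.Icc 0 X) :=
      ((ha j).continuousOn_derivWithin (uniqueDiffOn_Icc hX) le_rfl).abs
    have := (isCompact_Icc (a := (0:ℝ)) (b := X)).bddAbove_image hcd
    rwa [Set.image_eq_range] at this
  have hMle : ∀ j, ∀ x ∈ Set.Icc (0:ℝ) X, |derivWithin (a j) (Set.Icc 0 X) x| ≤ M j :=
    fun j x hx => le_ciSup (hbdd j) (⟨x, hx⟩ : Set.Icc (0:ℝ) X)
  have hM0 : ∀ j, 0 ≤ M j :=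
    fun j => le_trans (abs_nonneg _) (hMle j 0 ⟨le_rfl, hX.le⟩)
  have hα0 : 0 ≤ α := hα ▸ Finset.sum_nonneg fun j _ => hM0 j
  have hmem : ∀ ζ ∈ Set.Icc (0:ℝ) ξ, ε * ζ ∈ Set.Icc (0:ℝ) X := by
    intro ζ hζ
    exact ⟨mul_nonneg hε.le hζ.1, le_trans (by nlinarith [hζ.2]) hεξ⟩
  have hmemξ : ε * ξ ∈ Set.Icc (0:ℝ) X := ⟨mul_nonneg hε.le hξ0, hεξ⟩
  have hsum : ∀ ζ ∈ Set.Icc (0:ℝ) ξ,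
      (∑ j : Fin m, |a j (ε * ζ) - a j (ε * ξ)|) ≤ α * (ε * (ξ - ζ)) := by
    intro ζ hζ
    rw [hα, Finset.sum_mul]
    refine Finset.sum_le_sum fun j _ => ?_
    have := (convex_Icc (0:ℝ) X).norm_image_sub_le_of_norm_derivWithin_le
      ((ha j).differentiableOn one_ne_zero)
      (fun x hx => hMle j x hx) hmemξ (hmem ζ hζ)
    rw [Real.norm_eq_abs, Real.norm_eq_abs] at this
    calc |a j (ε * ζ) - a j (ε * ξ)| ≤ M j * |ε * ζ - ε * ξ| := this
      _ = M j * (ε * (ξ - ζ)) := by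
          rw [abs_of_nonpos (by nlinarith [hζ.2] : ε * ζ - ε * ξ ≤ 0)]; ring
  set g : ℝ → ℝ := fun ζ => ε * α *
      (Real.exp (χ * ζ) * (ξ - ζ) ^ 1 + Real.exp (χ * ζ) * (ξ - ζ) ^ m) with hg
  have hmm : m - 1 + 1 = m := Nat.succ_pred_eq_of_pos hm
  have hptwise : ∀ ζ ∈ Set.Icc (0:ℝ) ξ,
      Real.exp (χ * ζ) * (1 + (ξ - ζ) ^ (m - 1)) *
        ∑ j : Fin m, |a j (ε * ζ) - a j (ε * ξ)| ≤ g ζ := by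
    intro ζ hζ
    have ht : 0 ≤ ξ - ζ := by linarith [hζ.2]
    have hfac : 0 ≤ Real.exp (χ * ζ) * (1 + (ξ - ζ) ^ (m - 1)) := by positivity
    calc Real.exp (χ * ζ) * (1 + (ξ - ζ) ^ (m - 1)) *
          ∑ j : Fin m, |a j (ε * ζ) - a j (ε * ξ)|
        ≤ Real.exp (χ * ζ) * (1 + (ξ - ζ) ^ (m - 1)) * (α * (ε * (ξ - ζ))) :=
          mul_le_mul_of_nonneg_left (hsum ζ hζ) hfac
      _ = g ζ := by
          show _ = ε * α * (Real.exp (χ * ζ) * (ξ - ζ) ^ 1 + Real.exp (χ * ζ) * (ξ - ζ) ^ m)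
          have : (ξ - ζ) ^ m = (ξ - ζ) ^ (m - 1) * (ξ - ζ) := by
            conv_lhs => rw [← hmm]
            rw [pow_succ]
          rw [this]; ring
  have hcontsum : ContinuousOn
      (fun ζ => ∑ j : Fin m, |a j (ε * ζ) - a j (ε * ξ)|) (Set.Icc 0 ξ) := by
    apply continuousOn_finset_sum
    intro j _
    have h1 : ContinuousOn (fun ζ : ℝ => a j (ε * ζ)) (Set.Icc 0 ξ) :=
      ((ha j).continuousOn).comp
        ((continuous_const.mul continuous_id).continuousOn) hmem
    exact (h1.sub continuousOn_const).abs
  have hf_int : IntervalIntegrable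
      (fun ζ => Real.exp (χ * ζ) * (1 + (ξ - ζ) ^ (m - 1)) *
        ∑ j : Fin m, |a j (ε * ζ) - a j (ε * ξ)|) volume 0 ξ := by
    apply ContinuousOn.intervalIntegrable
    rw [Set.uIcc_of_le hξ0]
    exact ((Real.continuous_exp.comp (continuous_const.mul continuous_id)).mul
      (continuous_const.add ((continuous_const.sub continuous_id).pow _))).continuousOn.mul
      hcontsum
  have hg_int : IntervalIntegrable g volume 0 ξ := by
    apply Continuous.intervalIntegrable
    fun_prop
  have step1 : (∫ ζ in (0:ℝ)..ξ, Real.exp (χ * ζ) * (1 + (ξ - ζ) ^ (m - 1)) *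
        ∑ j : Fin m, |a j (ε * ζ) - a j (ε * ξ)|) ≤ ∫ ζ in (0:ℝ)..ξ, g ζ :=
    intervalIntegral.integral_mono_on hξ0 hf_int hg_int hptwise
  have step2 : (∫ ζ in (0:ℝ)..ξ, g ζ) = ε * α *
      ((∫ ζ in (0:ℝ)..ξ, Real.exp (χ * ζ) * (ξ - ζ) ^ 1) +
        ∫ ζ in (0:ℝ)..ξ, Real.exp (χ * ζ) * (ξ - ζ) ^ m) := by
    rw [hg, intervalIntegral.integral_const_mul, intervalIntegral.integral_add]
    · apply Continuous.intervalIntegrable; fun_prop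
    · apply Continuous.intervalIntegrable; fun_prop
  have key1 := exp_pow_integral_bound 1 hχ hξ0
  have keym := exp_pow_integral_bound m hχ hξ0
  have step3 : ε * α *
      ((∫ ζ in (0:ℝ)..ξ, Real.exp (χ * ζ) * (ξ - ζ) ^ 1) +
        ∫ ζ in (0:ℝ)..ξ, Real.exp (χ * ζ) * (ξ - ζ) ^ m)
      ≤ ε * α * ((Nat.factorial 1 : ℝ) / χ ^ (1 + 1) * Real.exp (χ * ξ) +
          (Nat.factorial m : ℝ) / χ ^ (m + 1) * Real.exp (χ * ξ)) :=
    mul_le_mul_of_nonneg_left (add_le_add key1 keym) (by positivity)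
  have hpow : χ ^ (m + 1) = χ ^ (m - 1) * χ ^ 2 := by
    rw [← pow_add]; congr 1; omega
  have final : ε * α * ((Nat.factorial 1 : ℝ) / χ ^ (1 + 1) * Real.exp (χ * ξ) +
      (Nat.factorial m : ℝ) / χ ^ (m + 1) * Real.exp (χ * ξ))
      = ε * β * Real.exp (χ * ξ) := by
    rw [hβ, Nat.factorial_one, hpow]
    have h1 : χ ^ (m - 1) ≠ 0 := by positivity
    have h2 : χ ^ 2 ≠ 0 := by positivity
    field_simp
    ring
  linarith [step1, step2, step3, final, step2 ▸ step1]
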